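/- Let a₁, a₂ be nonzero complex numbers with |a₁|² + |a₂|² < 1, and let T on H²(𝔻) be defined by T(1) = a₁ z + a₂ z², T(zⁿ) = z^{n+2} for n ≥ 1. Then T is hyponormal, i.e., T*T - TT* ≥ 0. -/

import Mathlib

open ContinuousLinearMap

open scoped InnerProductSpace in
/-- If `|a₁|² + |a₂|² < 1` (with `a₁, a₂ ≠ 0`) and `T 1 = a₁ z + a₂ z²`,
`T zⁿ = z^{n+2}` for `n ≥ 1`, then `T` is hyponormal: `T*T - TT* ≥ 0`. -/
theorem example_operator_hyponormal
    {H : Type*} [NormedAddCommGroup H] [InnerProductSpace ℂ H] [CompleteSpace H]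
    (e : HilbertBasis ℕ ℂ H) (a₁ a₂ : ℂ) (ha₁ : a₁ ≠ 0) (ha₂ : a₂ ≠ 0)
    (hlt : ‖a₁‖ ^ 2 + ‖a₂‖ ^ 2 < 1)
    (T : H →L[ℂ] H)
    (hT0 : T (e 0) = a₁ • e 1 + a₂ • e 2)
    (hTn : ∀ n : ℕ, 1 ≤ n → T (e n) = e (n + 2)) :
    (adjoint T * T - T * adjoint T).IsPositive := by
  have horth : ∀ i j : ℕ, ⟪e i, e j⟫_ℂ = if i = j then 1 else 0 :=
    orthonormal_iff_ite.1 e.orthonormal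
  -- extensionality via the Hilbert basis
  have hext : ∀ x y : H, (∀ m, ⟪e m, x⟫_ℂ = ⟪e m, y⟫_ℂ) → x = y := by
    intro x y h
    apply e.repr.injective
    ext m
    simpa [e.repr_apply_apply] using h m
  set S := adjoint T with hSdef
  -- adjoint on basis vectors
  have hadj : ∀ (m k : ℕ), ⟪e m, S (e k)⟫_ℂ = ⟪T (e m), e k⟫_ℂ := by
    intro m k; rw [hSdef, adjoint_inner_right]
  have hS0 : S (e 0) = 0 := by
    apply hext _ _ ?_
    intro m
    rw [hadj, inner_zero_right]
    rcases m with _ | m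
    · simp [hT0, inner_add_left, inner_smul_left, horth]
    · rw [hTn (m + 1) (by omega), horth]
      simp
  have hS1 : S (e 1) = (starRingEnd ℂ a₁) • e 0 := by
    apply hext _ _ ?_
    intro m
    rw [hadj, inner_smul_right]
    rcases m with _ | m
    · simp [hT0, inner_add_left, inner_smul_left, horth, e.orthonormal.1]
    · rw [hTn (m + 1) (by omega), horth, horth]
      simp
  have hS2 : S (e 2) = (starRingEnd ℂ a₂) • e 0 := by
    apply hext _ _ ?_
    intro m
    rw [hadj, inner_smul_right]
    rcases m with _ | m
    · simp [hT0, inner_add_left, inner_smul_left, horth, e.orthonormal.1]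
    · rw [hTn (m + 1) (by omega), horth, horth]
      simp
  have hSn : ∀ n : ℕ, S (e (n + 3)) = e (n + 1) := by
    intro n
    apply hext _ _ ?_
    intro m
    rw [hadj]
    rcases m with _ | m
    · rw [horth]
      simp [hT0, inner_add_left, inner_smul_left, horth]
    · rw [hTn (m + 1) (by omega), horth, horth]
      have hiff : (m + 1 + 2 = n + 3) ↔ (m + 1 = n + 1) := by omega
      rw [if_congr hiff rfl rfl]
  -- Parseval
  have parseval : ∀ x : H, HasSum (fun n => ‖⟪e n, x⟫_ℂ‖ ^ 2) (‖x‖ ^ 2) := by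
    intro x
    have h := (e.hasSum_inner_mul_inner x x).mapL Complex.reCLM
    have h1 : ∀ n : ℕ, Complex.reCLM (⟪x, e n⟫_ℂ * ⟪e n, x⟫_ℂ) = ‖⟪e n, x⟫_ℂ‖ ^ 2 := by
      intro n
      rw [← inner_conj_symm x (e n), Complex.reCLM_apply, mul_comm, Complex.mul_conj]
      rw [Complex.ofReal_re, Complex.normSq_eq_norm_sq]
    have h2 : Complex.reCLM ⟪x, x⟫_ℂ = ‖x‖ ^ 2 := by
      simpa using inner_self_eq_norm_sq (𝕜 := ℂ) x
    rw [h2] at h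
    exact h.congr_fun fun n => (h1 n).symm
  -- the key inequality
  have key : ∀ f : H, ‖S f‖ ^ 2 ≤ ‖T f‖ ^ 2 := by
    intro f
    set c : ℕ → ℂ := fun n => ⟪e n, f⟫_ℂ with hc
    -- coefficients of T f
    have hTc : ∀ k : ℕ, ⟪e k, T f⟫_ℂ =
        if k = 0 then 0 else if k = 1 then a₁ * c 0 else if k = 2 then a₂ * c 0
        else c (k - 2) := by
      intro k
      have : ⟪e k, T f⟫_ℂ = ⟪S (e k), f⟫_ℂ := (adjoint_inner_left T f (e k)).symm
      rw [this]
      match k with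
      | 0 => rw [hS0]; simp
      | 1 => rw [hS1]; simp [inner_smul_left, hc]; ring
      | 2 => rw [hS2]; simp [inner_smul_left, hc]; ring
      | (n + 3) => rw [hSn]; simp [hc]
    have hSc : ∀ k : ℕ, ⟪e k, S f⟫_ℂ =
        if k = 0 then (starRingEnd ℂ a₁) * c 1 + (starRingEnd ℂ a₂) * c 2
        else c (k + 2) := by
      intro k
      have : ⟪e k, S f⟫_ℂ = ⟪T (e k), f⟫_ℂ := by rw [hSdef, adjoint_inner_right]
      rw [this]
      match k with
      | 0 => rw [hT0]; simp [inner_add_left, inner_smul_left, hc]; ring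
      | (n + 1) => rw [hTn (n + 1) (by omega)]; simp [hc]
    have hfsum := parseval f
    have hTsum := parseval (T f)
    have hSsum := parseval (S f)
    -- compute ‖T f‖²
    have hT3 : HasSum (fun n => ‖c (n + 1)‖ ^ 2)
        (‖T f‖ ^ 2 - ∑ i ∈ Finset.range 3, ‖⟪e i, T f⟫_ℂ‖ ^ 2) := by
      have := (hasSum_nat_add_iff' (f := fun n => ‖⟪e n, T f⟫_ℂ‖ ^ 2) 3).2 hTsum
      refine this.congr_fun ?_
      intro n
      rw [hTc (n + 3)]
      simp
    have hf1 : HasSum (fun n => ‖c (n + 1)‖ ^ 2)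
        (‖f‖ ^ 2 - ∑ i ∈ Finset.range 1, ‖c i‖ ^ 2) :=
      (hasSum_nat_add_iff' (f := fun n => ‖c n‖ ^ 2) 1).2 hfsum
    have hf3 : HasSum (fun n => ‖c (n + 3)‖ ^ 2)
        (‖f‖ ^ 2 - ∑ i ∈ Finset.range 3, ‖c i‖ ^ 2) :=
      (hasSum_nat_add_iff' (f := fun n => ‖c n‖ ^ 2) 3).2 hfsum
    have hS1' : HasSum (fun n => ‖c (n + 3)‖ ^ 2)
        (‖S f‖ ^ 2 - ∑ i ∈ Finset.range 1, ‖⟪e i, S f⟫_ℂ‖ ^ 2) := by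
      have := (hasSum_nat_add_iff' (f := fun n => ‖⟪e n, S f⟫_ℂ‖ ^ 2) 1).2 hSsum
      refine this.congr_fun ?_
      intro n
      rw [hSc (n + 1)]
      simp
    have eqT := hT3.unique hf1
    have eqS := hS1'.unique hf3
    have hsum3 : ∑ i ∈ Finset.range 3, ‖⟪e i, T f⟫_ℂ‖ ^ 2
        = ‖a₁‖ ^ 2 * ‖c 0‖ ^ 2 + ‖a₂‖ ^ 2 * ‖c 0‖ ^ 2 := by
      rw [Finset.sum_range_succ, Finset.sum_range_succ, Finset.sum_range_one,
        hTc 0, hTc 1, hTc 2]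
      simp [norm_mul, mul_pow]
      try ring
    have hsum1 : ∑ i ∈ Finset.range 1, ‖⟪e i, S f⟫_ℂ‖ ^ 2
        = ‖(starRingEnd ℂ a₁) * c 1 + (starRingEnd ℂ a₂) * c 2‖ ^ 2 := by
      rw [Finset.sum_range_one, hSc 0]
      simp
    rw [hsum3] at eqT
    rw [hsum1] at eqS
    rw [Finset.sum_range_one] at eqT
    rw [Finset.sum_range_succ, Finset.sum_range_succ, Finset.sum_range_one] at eqS
    -- Cauchy–Schwarz for two terms
    have hcs : ‖(starRingEnd ℂ a₁) * c 1 + (starRingEnd ℂ a₂) * c 2‖ ^ 2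
        ≤ ‖c 1‖ ^ 2 + ‖c 2‖ ^ 2 := by
      have h1 : ‖(starRingEnd ℂ a₁) * c 1 + (starRingEnd ℂ a₂) * c 2‖
          ≤ ‖a₁‖ * ‖c 1‖ + ‖a₂‖ * ‖c 2‖ := by
        calc _ ≤ ‖(starRingEnd ℂ a₁) * c 1‖ + ‖(starRingEnd ℂ a₂) * c 2‖ := norm_add_le _ _
        _ = ‖a₁‖ * ‖c 1‖ + ‖a₂‖ * ‖c 2‖ := by simp
      have hs : ‖a₁‖ ^ 2 + ‖a₂‖ ^ 2 < 1 := by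
        simpa using hlt
      nlinarith [norm_nonneg ((starRingEnd ℂ a₁) * c 1 + (starRingEnd ℂ a₂) * c 2),
        norm_nonneg a₁, norm_nonneg a₂, norm_nonneg (c 1), norm_nonneg (c 2),
        sq_nonneg (‖a₁‖ * ‖c 2‖ - ‖a₂‖ * ‖c 1‖), sq_nonneg (‖c 1‖), sq_nonneg (‖c 2‖)]
    have hc0 : (0:ℝ) ≤ ‖c 0‖ ^ 2 := sq_nonneg _
    nlinarith [sq_nonneg (‖c 0‖), norm_nonneg a₁, norm_nonneg a₂]
  constructor
  · refine isSelfAdjoint_iff_isSymmetric.1 ?_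
    show star _ = _
    simp only [hSdef, star_sub, star_mul, star_eq_adjoint, adjoint_adjoint]
  · intro x
    rw [reApplyInnerSelf_apply]
    have h1 : ⟪(adjoint T * T - T * adjoint T) x, x⟫_ℂ
        = ⟪T x, T x⟫_ℂ - ⟪S x, S x⟫_ℂ := by
      simp only [sub_apply, mul_apply_eq_comp, inner_sub_left]
      rw [adjoint_inner_left T x (T x), ← adjoint_inner_right T (adjoint T x) x]
    rw [h1]
    have := key x
    simp only [map_sub, inner_self_eq_norm_sq]
    linarith
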